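/- Let r ≥ 0 and h ∈ ℕ, and let g : ℤ_p → E be locally analytic of radius p^{-h}, i.e. on each ball a + p^h ℤ_p one has g(x) = Σ_{k≥0} ã_k(g,a) ((x-a)/p^h)^k with v_p(ã_k(g,a)) → ∞ uniformly. Then g is of class C^r, i.e. for ε_{g,r}(x,y) = g(x+y) − Σ_{j=0}^{⌊r⌋} g^{(j)}(x) y^j / j!, the quantity inf_{x ∈ ℤ_p, y ∈ p^hℤ_p}(v_p(ε_{g,r}(x,y)) − rh') tends to ∞ as h' → ∞. Moreover v'_{C^r}(g) ≥ v_{LA_h}(g) − rh, where v_{LA_h}(g) = inf_{a,k} v_p(ã_k(g,a)). -/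
import Mathlib


open Finset

/-- Locally analytic functions of radius `p^{-h}` on `ℤ_p` are of class `C^r` for every
`r ≥ 0`, with `v'_{C^r}(g) ≥ v_{LA_h}(g) − rh`. Here `g` is given on each ball
`a + p^h ℤ_p` by a convergent expansion `g(x) = Σ_k ã_k(g,a) ((x−a)/p^h)^k` whose
coefficients have valuation `≥ c` and tend to `∞` uniformly; valuations are expressed
via norms (`v_p(z) ≥ t ↔ ‖z‖ ≤ p^{-t}`). -/
theorem locallyAnalytic_isCr_and_val_bound (p : ℕ) [Fact p.Prime]
    (E : Type*) [NormedField E] [Algebra ℚ_[p] E] [FiniteDimensional ℚ_[p] E]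
    (hE : ∀ q : ℚ_[p], ‖algebraMap ℚ_[p] E q‖ = ‖q‖)
    (r : ℝ) (hr : 0 ≤ r) (h : ℕ) (g : ℤ_[p] → E) (A : ℤ_[p] → ℕ → E)
    (hexp : ∀ a x : ℤ_[p], ‖x - a‖ ≤ (p : ℝ) ^ (-(h : ℤ)) →
      HasSum (fun k : ℕ =>
        A a k * (algebraMap ℚ_[p] E (((x - a : ℤ_[p]) : ℚ_[p]) / (p : ℚ_[p]) ^ h)) ^ k) (g x))
    (c : ℝ) (hc : ∀ (a : ℤ_[p]) (k : ℕ), ‖A a k‖ ≤ (p : ℝ) ^ (-c))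
    (hgrow : ∀ C : ℝ, ∃ K : ℕ, ∀ (a : ℤ_[p]), ∀ k ≥ K, ‖A a k‖ ≤ (p : ℝ) ^ (-C)) :
    ∃ D : ℕ → ℤ_[p] → E, D 0 = g ∧
      -- `g` is of class `C^r`: `C_{g,r}(h') → ∞` as `h' → ∞`
      (∀ C : ℝ, ∃ H : ℕ, ∀ h' : ℕ, H ≤ h' → ∀ x y : ℤ_[p],
          ‖y‖ ≤ (p : ℝ) ^ (-(h' : ℤ)) →
          ‖g (x + y) - ∑ j ∈ Finset.range (⌊r⌋₊ + 1),
              algebraMap ℚ_[p] E (((y : ℚ_[p]) ^ j) / (j.factorial : ℚ_[p])) * D j x‖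
            ≤ (p : ℝ) ^ (-(C + r * h'))) ∧
      -- first part of `v'_{C^r}(g) ≥ c − r h`
      (∀ j ≤ ⌊r⌋₊, ∀ x : ℤ_[p],
          ‖algebraMap ℚ_[p] E ((j.factorial : ℚ_[p])⁻¹) * D j x‖ ≤ (p : ℝ) ^ (-(c - r * h))) ∧
      -- second part of `v'_{C^r}(g) ≥ c − r h`
      (∀ x y : ℤ_[p],
          ‖g (x + y) - ∑ j ∈ Finset.range (⌊r⌋₊ + 1),
              algebraMap ℚ_[p] E (((y : ℚ_[p]) ^ j) / (j.factorial : ℚ_[p])) * D j x‖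
            ≤ (p : ℝ) ^ (-(c - r * h)) * ‖y‖ ^ r) := by
  have hpp : p.Prime := Fact.out
  have hp1 : (1:ℝ) < p := by exact_mod_cast hpp.one_lt
  have hp0 : (0:ℝ) < p := lt_trans one_pos hp1
  haveI : IsUltrametricDist E := by
    refine IsUltrametricDist.isUltrametricDist_of_forall_norm_natCast_le_one fun nn => ?_
    rw [← map_natCast (algebraMap ℚ_[p] E), hE]
    exact_mod_cast Padic.norm_int_le_one (nn : ℤ)
  have hsub : ∀ a b : E, ‖a - b‖ ≤ max ‖a‖ ‖b‖ := fun a b => by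
    simpa [dist_eq_norm] using IsUltrametricDist.dist_triangle_max a 0 b
  have hrn : r < (⌊r⌋₊ : ℝ) + 1 := Nat.lt_floor_add_one r
  have hnr : (⌊r⌋₊ : ℝ) ≤ r := Nat.floor_le hr
  have hpq : ((p : ℚ_[p])) ≠ 0 := by exact_mod_cast hpp.ne_zero
  have hfact : ∀ j : ℕ, ((j.factorial : ℚ_[p])) ≠ 0 :=
    fun j => Nat.cast_ne_zero.2 j.factorial_ne_zero
  -- the function m
  set m : ℤ_[p] → E := fun y => algebraMap ℚ_[p] E ((y : ℚ_[p]) / (p : ℚ_[p]) ^ h) with hmdef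
  have hmnorm : ∀ y : ℤ_[p], ‖m y‖ = ‖y‖ * (p : ℝ) ^ (h : ℕ) := by
    intro y
    rw [hmdef]
    simp only
    rw [hE, norm_div, norm_pow, Padic.norm_p, ← PadicInt.norm_def, inv_pow, div_eq_mul_inv, inv_inv]
  -- the derivatives
  set Dd : ℕ → ℤ_[p] → E :=
    fun j x => algebraMap ℚ_[p] E ((j.factorial : ℚ_[p]) / ((p : ℚ_[p]) ^ h) ^ j) * A x j
    with hDd
  have hterm : ∀ (x y : ℤ_[p]) (j : ℕ),
      algebraMap ℚ_[p] E ((y : ℚ_[p]) ^ j / (j.factorial : ℚ_[p])) * Dd j x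
        = A x j * m y ^ j := by
    intro x y j
    rw [hDd, hmdef]
    simp only
    rw [← mul_assoc, ← map_mul, ← map_pow]
    have : ((y : ℚ_[p]) ^ j / (j.factorial : ℚ_[p]))
        * ((j.factorial : ℚ_[p]) / ((p : ℚ_[p]) ^ h) ^ j)
        = ((y : ℚ_[p]) / (p : ℚ_[p]) ^ h) ^ j := by
      rw [div_mul_div_comm, mul_comm ((y : ℚ_[p]) ^ j), mul_div_mul_left _ _ (hfact j), div_pow]
    rw [this, mul_comm]
  have hg0 : ∀ z : ℤ_[p], g z = A z 0 := by
    intro z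
    have h1 := hexp z z (by simp)
    simp only [sub_self, PadicInt.coe_zero, zero_div, map_zero] at h1
    have h2 : HasSum (fun k : ℕ => A z k * (0 : E) ^ k) (A z 0 * (0:E) ^ 0) :=
      hasSum_single 0 (fun k hk => by simp [zero_pow hk])
    simpa using h1.unique h2
  have hexp' : ∀ x y : ℤ_[p], ‖y‖ ≤ (p:ℝ) ^ (-(h:ℤ)) →
      HasSum (fun k => A x k * m y ^ k) (g (x + y)) := by
    intro x y hy
    have := hexp x (x + y) (by rwa [add_sub_cancel_left])
    rw [add_sub_cancel_left] at this
    exact this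
  -- the key tail estimate
  have key : ∀ (x y : ℤ_[p]) (B : ℝ), 0 ≤ B →
      (∀ k, ⌊r⌋₊ + 1 ≤ k → ‖A x k‖ * ‖m y‖ ^ k ≤ B) →
      ‖y‖ ≤ (p:ℝ) ^ (-(h:ℤ)) →
      ‖g (x + y) - ∑ j ∈ Finset.range (⌊r⌋₊ + 1),
          algebraMap ℚ_[p] E (((y : ℚ_[p]) ^ j) / (j.factorial : ℚ_[p])) * Dd j x‖ ≤ B := by
    intro x y B hB hbd hy
    have hsum := hexp' x y hy
    have htail' : HasSum (fun k => A x (k + (⌊r⌋₊ + 1)) * m y ^ (k + (⌊r⌋₊ + 1)))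
        (g (x + y) - ∑ i ∈ Finset.range (⌊r⌋₊ + 1), A x i * m y ^ i) := by
      refine (hasSum_nat_add_iff' (f := fun k => A x k * m y ^ k) (⌊r⌋₊ + 1)).2 hsum
    have heq : g (x + y) - ∑ j ∈ Finset.range (⌊r⌋₊ + 1),
        algebraMap ℚ_[p] E (((y : ℚ_[p]) ^ j) / (j.factorial : ℚ_[p])) * Dd j x
        = ∑' k : ℕ, (A x (k + (⌊r⌋₊ + 1)) * m y ^ (k + (⌊r⌋₊ + 1))) := by
      rw [htail'.tsum_eq]
      congr 1
      exact Finset.sum_congr rfl fun j _ => hterm x y j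
    rw [heq]
    refine IsUltrametricDist.norm_tsum_le_of_forall_le_of_nonneg hB fun k => ?_
    rw [norm_mul, norm_pow]
    exact hbd _ le_add_self
  -- exponent arithmetic
  have hbase : (p:ℝ) ^ (-(c - r * h)) = (p:ℝ) ^ (-c) * ((p:ℝ) ^ (h:ℕ)) ^ r := by
    rw [← Real.rpow_natCast (p:ℝ) h, ← Real.rpow_mul hp0.le, ← Real.rpow_add hp0]
    ring_nf
  refine ⟨Dd, ?_, ?_, ?_, ?_⟩
  · funext x
    rw [hDd]
    simp [hg0 x]
  · -- part 1
    intro C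
    refine ⟨max h ⌈(C - c + ((⌊r⌋₊:ℝ) + 1) * h) / (((⌊r⌋₊:ℝ) + 1) - r)⌉₊, fun h' hH x y hy => ?_⟩
    have hh : h ≤ h' := le_trans (le_max_left _ _) hH
    have hpos : (0:ℝ) < ((⌊r⌋₊:ℝ) + 1) - r := by linarith
    have hceil : (C - c + ((⌊r⌋₊:ℝ) + 1) * h) / (((⌊r⌋₊:ℝ) + 1) - r) ≤ h' := by
      refine le_trans (Nat.le_ceil _) ?_
      exact_mod_cast le_trans (le_max_right _ _) hH
    rw [div_le_iff₀ hpos] at hceil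
    have hlin : -c + ((h:ℝ) - h') * ((⌊r⌋₊:ℝ) + 1) ≤ -(C + r * h') := by nlinarith
    have hyh : ‖y‖ ≤ (p:ℝ) ^ (-(h:ℤ)) := by
      refine le_trans hy (zpow_le_zpow_right₀ hp1.le (by exact_mod_cast neg_le_neg (by exact_mod_cast hh)))
    refine key x y _ (by positivity) (fun k hk => ?_) hyh
    have hmb : ‖m y‖ ≤ (p:ℝ) ^ ((h:ℤ) - h') := by
      rw [hmnorm, sub_eq_neg_add, zpow_add₀ (ne_of_gt hp0), zpow_natCast]
      exact mul_le_mul_of_nonneg_right hy (by positivity)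
    have hb0 : (0:ℝ) ≤ (p:ℝ) ^ ((h:ℤ) - h') := by positivity
    have hb1 : (p:ℝ) ^ ((h:ℤ) - h') ≤ 1 := by
      refine zpow_le_one_of_nonpos₀ hp1.le (by omega)
    calc ‖A x k‖ * ‖m y‖ ^ k
        ≤ (p:ℝ) ^ (-c) * ((p:ℝ) ^ ((h:ℤ) - h')) ^ k := by
          refine mul_le_mul (hc x k) (pow_le_pow_left₀ (norm_nonneg _) hmb k) (by positivity) (by positivity)
      _ ≤ (p:ℝ) ^ (-c) * ((p:ℝ) ^ ((h:ℤ) - h')) ^ (⌊r⌋₊ + 1) := by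
          refine mul_le_mul_of_nonneg_left (pow_le_pow_of_le_one hb0 hb1 hk) (by positivity)
      _ = (p:ℝ) ^ (-c + ((h:ℝ) - h') * ((⌊r⌋₊:ℝ) + 1)) := by
          rw [Real.rpow_add hp0, ← Real.rpow_intCast (p:ℝ) ((h:ℤ) - h'), ← Real.rpow_natCast _ (⌊r⌋₊ + 1),
            ← Real.rpow_mul hp0.le]
          push_cast
          ring_nf
      _ ≤ (p:ℝ) ^ (-(C + r * h')) := Real.rpow_le_rpow_of_exponent_le hp1.le hlin
  · -- part 2
    intro j hj x
    have hrw : algebraMap ℚ_[p] E ((j.factorial : ℚ_[p])⁻¹) * Dd j x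
        = algebraMap ℚ_[p] E ((((p : ℚ_[p]) ^ h) ^ j)⁻¹) * A x j := by
      rw [hDd]
      simp only
      rw [← mul_assoc, ← map_mul]
      congr 2
      rw [← mul_div_assoc, inv_mul_cancel₀ (hfact j), one_div]
    rw [hrw, norm_mul, hE, norm_inv, norm_pow, norm_pow, Padic.norm_p, inv_pow, inv_pow, inv_inv]
    calc ((p:ℝ) ^ h) ^ j * ‖A x j‖ ≤ ((p:ℝ) ^ h) ^ j * (p:ℝ) ^ (-c) :=
          mul_le_mul_of_nonneg_left (hc x j) (by positivity)
      _ = (p:ℝ) ^ ((j:ℝ) * h + -c) := by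
          rw [Real.rpow_add hp0, ← Real.rpow_natCast (p:ℝ) h, ← Real.rpow_natCast _ j,
            ← Real.rpow_mul hp0.le]
          ring_nf
      _ ≤ (p:ℝ) ^ (-(c - r * h)) := by
          refine Real.rpow_le_rpow_of_exponent_le hp1.le ?_
          have : (j:ℝ) ≤ r := le_trans (by exact_mod_cast hj) hnr
          nlinarith [ (Nat.cast_nonneg h : (0:ℝ) ≤ h) ]
  · -- part 3
    intro x y
    by_cases hy : ‖y‖ ≤ (p:ℝ) ^ (-(h:ℤ))
    · refine key x y _ (by positivity) (fun k hk => ?_) hy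
      rcases eq_or_ne y 0 with rfl | hy0
      · have : ‖m (0:ℤ_[p])‖ = 0 := by rw [hmnorm]; simp
        rw [this, zero_pow (by omega), mul_zero]
        positivity
      · have hy0' : 0 < ‖y‖ := norm_pos_iff.mpr hy0
        have hble : ‖y‖ * (p:ℝ) ^ (h:ℕ) ≤ 1 := by
          calc ‖y‖ * (p:ℝ) ^ (h:ℕ) ≤ (p:ℝ) ^ (-(h:ℤ)) * (p:ℝ) ^ (h:ℕ) :=
              mul_le_mul_of_nonneg_right hy (by positivity)
            _ = 1 := by
              rw [← zpow_natCast (p:ℝ) h, ← zpow_add₀ (ne_of_gt hp0)]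
              simp
        have hkr : r ≤ (k:ℝ) := by
          have : ((⌊r⌋₊:ℝ) + 1) ≤ (k:ℝ) := by exact_mod_cast hk
          linarith
        have h1 : ‖m y‖ ^ k ≤ (‖y‖ * (p:ℝ) ^ (h:ℕ)) ^ r := by
          rw [hmnorm, ← Real.rpow_natCast _ k]
          exact Real.rpow_le_rpow_of_exponent_ge (by positivity) hble hkr
        calc ‖A x k‖ * ‖m y‖ ^ k ≤ (p:ℝ) ^ (-c) * ((‖y‖ * (p:ℝ) ^ (h:ℕ)) ^ r) :=
              mul_le_mul (hc x k) h1 (by positivity) (by positivity)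
          _ = (p:ℝ) ^ (-(c - r * h)) * ‖y‖ ^ r := by
              rw [Real.mul_rpow hy0'.le (by positivity), hbase]; ring
    · push_neg at hy
      have hy0' : 0 < ‖y‖ := lt_trans (by positivity) hy
      have hb1 : 1 ≤ ‖y‖ * (p:ℝ) ^ (h:ℕ) := by
        have : (p:ℝ) ^ (-(h:ℤ)) * (p:ℝ) ^ (h:ℕ) = 1 := by
          rw [← zpow_natCast (p:ℝ) h, ← zpow_add₀ (ne_of_gt hp0)]; simp
        calc (1:ℝ) = (p:ℝ) ^ (-(h:ℤ)) * (p:ℝ) ^ (h:ℕ) := this.symm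
          _ ≤ ‖y‖ * (p:ℝ) ^ (h:ℕ) := mul_le_mul_of_nonneg_right hy.le (by positivity)
      have hBeq : (p:ℝ) ^ (-(c - r * h)) * ‖y‖ ^ r
          = (p:ℝ) ^ (-c) * (‖y‖ * (p:ℝ) ^ (h:ℕ)) ^ r := by
        rw [Real.mul_rpow hy0'.le (by positivity), hbase]; ring
      have hB0 : (0:ℝ) ≤ (p:ℝ) ^ (-c) * (‖y‖ * (p:ℝ) ^ (h:ℕ)) ^ r := by positivity
      rw [hBeq]
      rw [Finset.sum_congr rfl fun j _ => hterm x y j]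
      refine le_trans (hsub _ _) (max_le ?_ ?_)
      · rw [hg0 (x + y)]
        calc ‖A (x+y) 0‖ ≤ (p:ℝ) ^ (-c) := hc (x+y) 0
          _ ≤ (p:ℝ) ^ (-c) * (‖y‖ * (p:ℝ) ^ (h:ℕ)) ^ r := by
            nlinarith [Real.one_le_rpow hb1 hr, Real.rpow_pos_of_pos hp0 (-c)]
      · refine IsUltrametricDist.norm_sum_le_of_forall_le_of_nonneg hB0 fun j hj => ?_
        rw [norm_mul, norm_pow, hmnorm]
        have hjr : (j:ℝ) ≤ r := by
          have : (j:ℝ) ≤ (⌊r⌋₊:ℝ) := by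
            exact_mod_cast Nat.le_of_lt_succ (Finset.mem_range.1 hj)
          linarith
        calc ‖A x j‖ * (‖y‖ * (p:ℝ) ^ (h:ℕ)) ^ j
            ≤ (p:ℝ) ^ (-c) * (‖y‖ * (p:ℝ) ^ (h:ℕ)) ^ j :=
              mul_le_mul_of_nonneg_right (hc x j) (by positivity)
          _ ≤ (p:ℝ) ^ (-c) * (‖y‖ * (p:ℝ) ^ (h:ℕ)) ^ r := by
              refine mul_le_mul_of_nonneg_left ?_ (by positivity)
              rw [← Real.rpow_natCast _ j]
              exact Real.rpow_le_rpow_of_exponent_le hb1 hjr
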